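/- (Newly-failing-node bound (A22)) Assume the stability bounds (NE1) and (NE2) with constants 0 < λ_min ≤ λ_max, set κ = λ_max/λ_min, and let n ≥ 2. Let I' be a uniform random subset of {1,…,n} of size n−1, and set I = {0} ∪ I'. Then, with ξ = (n−1)/(n λ_max), for every e ∈ V: E(‖e − ξ Σ_{i∈I} ω_i R_i T_i e‖²) ≤ (1 − (n−1)²/(n² κ)) ‖e‖². -/

import Mathlib

open scoped RealInnerProductSpace

lemma count_mem_powersetCard {ι : Type*} [DecidableEq ι] (s : Finset ι) (k : ℕ) (i : ι)
    (hi : i ∈ s) :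
    ((s.powersetCard (k+1)).filter (fun A => i ∈ A)).card = (s.card - 1).choose k := by
  rw [← Finset.card_erase_of_mem hi, ← Finset.card_powersetCard]
  apply Finset.card_nbij' (fun A => A.erase i) (fun B => insert i B)
  · intro A hA
    simp only [Finset.mem_coe, Finset.mem_filter, Finset.mem_powersetCard] at hA
    obtain ⟨⟨hsub, hcard⟩, hmem⟩ := hA
    rw [Finset.mem_coe, Finset.mem_powersetCard]
    exact ⟨Finset.erase_subset_erase i hsub, by rw [Finset.card_erase_of_mem hmem, hcard]; rfl⟩
  · intro B hB
    rw [Finset.mem_coe, Finset.mem_powersetCard] at hB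
    obtain ⟨hsub, hcard⟩ := hB
    have hiB : i ∉ B := fun h => (Finset.mem_erase.1 (hsub h)).1 rfl
    simp only [Finset.mem_coe, Finset.mem_filter, Finset.mem_powersetCard]
    refine ⟨⟨Finset.insert_subset hi (hsub.trans (Finset.erase_subset i s)), ?_⟩,
      Finset.mem_insert_self i B⟩
    rw [Finset.card_insert_of_notMem hiB, hcard]
  · intro A hA
    simp only [Finset.mem_coe, Finset.mem_filter] at hA
    exact Finset.insert_erase hA.2
  · intro B hB
    rw [Finset.mem_coe, Finset.mem_powersetCard] at hB
    have hiB : i ∉ B := fun h => (Finset.mem_erase.1 (hB.1 h)).1 rfl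
    exact Finset.erase_insert hiB

lemma sum_powersetCard_sum {ι : Type*} [DecidableEq ι] (s : Finset ι) (k : ℕ) (c : ι → ℝ) :
    ∑ A ∈ s.powersetCard (k+1), ∑ j ∈ A, c j
      = ((s.card - 1).choose k : ℝ) * ∑ j ∈ s, c j := by
  calc ∑ A ∈ s.powersetCard (k+1), ∑ j ∈ A, c j
      = ∑ A ∈ s.powersetCard (k+1), ∑ j ∈ s, if j ∈ A then c j else 0 := by
        refine Finset.sum_congr rfl fun A hA => ?_
        rw [Finset.sum_ite_mem]
        congr 1
        exact (Finset.inter_eq_right.2 (Finset.mem_powersetCard.1 hA).1).symm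
    _ = ∑ j ∈ s, ∑ A ∈ s.powersetCard (k+1), if j ∈ A then c j else 0 := Finset.sum_comm
    _ = ∑ j ∈ s, ((s.card - 1).choose k : ℝ) * c j := by
        refine Finset.sum_congr rfl fun j hj => ?_
        rw [← Finset.sum_filter, Finset.sum_const, count_mem_powersetCard s k j hj,
          nsmul_eq_mul]
    _ = _ := by rw [← Finset.mul_sum]


set_option maxHeartbeats 1000000 in
/-- **newly-failing-node bound (A22).** Assume (NE1), (NE2) with
`0 < λ_min ≤ λ_max`, `κ = λ_max/λ_min`, and `n ≥ 2`. Let `I'` be a uniform random subset of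
`{1,…,n}` of size `n−1`, and set `I = {0} ∪ I'`. Then, with `ξ = (n−1)/(n λ_max)`:
`E(‖e − ξ ∑_{i∈I} ω_i R_i T_i e‖²) ≤ (1 − (n−1)²/(n²κ)) ‖e‖²`. -/
theorem newly_failing_node_bound
    {V : Type*} [NormedAddCommGroup V] [InnerProductSpace ℝ V] [CompleteSpace V]
    {n : ℕ} {W : Fin (n + 1) → Type*}
    [∀ i, NormedAddCommGroup (W i)] [∀ i, InnerProductSpace ℝ (W i)]
    [∀ i, CompleteSpace (W i)]
    (R : ∀ i, W i →L[ℝ] V) (ω : Fin (n + 1) → ℝ) (hω : ∀ i, 0 < ω i)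
    (lmin lmax : ℝ) (hlmin : 0 < lmin) (hminmax : lmin ≤ lmax)
    (hNE1 : ∀ v : V,
      lmin * ‖v‖ ^ 2 ≤ ⟪(∑ i, ω i • R i ((ContinuousLinearMap.adjoint (R i)) v)), v⟫)
    (hNE2 : ∀ w : ∀ i, W i,
      ‖∑ i, ω i • R i (w i)‖ ^ 2 ≤ lmax * ∑ i, ω i * ‖w i‖ ^ 2)
    (hn : 2 ≤ n) (e : V) :
    ((n.choose (n - 1) : ℝ))⁻¹ *
        ∑ I' ∈ Finset.powersetCard (n - 1) (({0} : Finset (Fin (n + 1)))ᶜ),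
          ‖e - (((n : ℝ) - 1) / (n * lmax)) •
              ∑ i ∈ ({0} : Finset (Fin (n + 1))) ∪ I',
                ω i • R i ((ContinuousLinearMap.adjoint (R i)) e)‖ ^ 2 ≤
      (1 - ((n : ℝ) - 1) ^ 2 / ((n : ℝ) ^ 2 * (lmax / lmin))) * ‖e‖ ^ 2 := by
  have hlmax : (0:ℝ) < lmax := hlmin.trans_le hminmax
  have hN : (2:ℝ) ≤ (n:ℝ) := by exact_mod_cast hn
  have hN0 : (0:ℝ) < (n:ℝ) := by linarith
  set F : Fin (n+1) → V := fun i => ω i • R i ((ContinuousLinearMap.adjoint (R i)) e) with hF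
  set c : Fin (n+1) → ℝ := fun i => ω i * ‖(ContinuousLinearMap.adjoint (R i)) e‖ ^ 2 with hc
  have hc0 : ∀ i, 0 ≤ c i := fun i => mul_nonneg (hω i).le (by positivity)
  have hip : ∀ i, ⟪F i, e⟫ = c i := by
    intro i
    rw [hF, real_inner_smul_left]
    congr 1
    rw [← ContinuousLinearMap.adjoint_inner_right, real_inner_self_eq_norm_sq]
  have hS : lmin * ‖e‖ ^ 2 ≤ ∑ i, c i := by
    have := hNE1 e
    rwa [sum_inner, Finset.sum_congr rfl (fun i _ => hip i)] at this
  -- subset NE2 bound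
  have hsub : ∀ J : Finset (Fin (n+1)), ‖∑ i ∈ J, F i‖ ^ 2 ≤ lmax * ∑ i ∈ J, c i := by
    intro J
    classical
    have := hNE2 (fun i => if i ∈ J then (ContinuousLinearMap.adjoint (R i)) e else 0)
    have h1 : ∑ i, ω i • R i (if i ∈ J then (ContinuousLinearMap.adjoint (R i)) e else 0)
        = ∑ i ∈ J, F i := by
      rw [← Finset.sum_filter_add_sum_filter_not Finset.univ (· ∈ J)]
      have : ∀ i ∈ Finset.univ.filter (· ∉ J),
          ω i • R i (if i ∈ J then (ContinuousLinearMap.adjoint (R i)) e else 0) = 0 := by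
        intro i hi
        simp only [Finset.mem_filter] at hi
        simp [hi.2]
      rw [Finset.sum_eq_zero this, add_zero]
      refine Finset.sum_congr (by simp [Finset.filter_mem_eq_inter]) fun i hi => ?_
      simp [hF, hi]
    have h2 : ∑ i, ω i * ‖(if i ∈ J then (ContinuousLinearMap.adjoint (R i)) e else 0 : W i)‖ ^ 2
        = ∑ i ∈ J, c i := by
      rw [← Finset.sum_filter_add_sum_filter_not Finset.univ (· ∈ J)]
      have : ∀ i ∈ Finset.univ.filter (· ∉ J),
          ω i * ‖(if i ∈ J then (ContinuousLinearMap.adjoint (R i)) e else 0 : W i)‖ ^ 2 = 0 := by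
        intro i hi
        simp only [Finset.mem_filter] at hi
        simp [hi.2]
      rw [Finset.sum_eq_zero this, add_zero]
      refine Finset.sum_congr (by simp [Finset.filter_mem_eq_inter]) fun i hi => ?_
      simp [hc, hi]
    rw [h1, h2] at this
    exact this
  set ξ : ℝ := ((n:ℝ) - 1) / (n * lmax) with hξ
  have hξ0 : 0 ≤ ξ := by
    apply div_nonneg (by linarith) (by positivity)
  -- per-subset bound
  have hper : ∀ J : Finset (Fin (n+1)),
      ‖e - ξ • ∑ i ∈ J, F i‖ ^ 2 ≤ ‖e‖ ^ 2 + (ξ^2 * lmax - 2*ξ) * ∑ i ∈ J, c i := by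
    intro J
    have hexp : ‖e - ξ • ∑ i ∈ J, F i‖ ^ 2
        = ‖e‖ ^ 2 - 2 * ξ * (∑ i ∈ J, c i) + ξ^2 * ‖∑ i ∈ J, F i‖ ^ 2 := by
      rw [norm_sub_sq_real, real_inner_smul_right, norm_smul]
      rw [real_inner_comm, sum_inner, Finset.sum_congr rfl (fun i _ => hip i)]
      rw [mul_pow, Real.norm_eq_abs, sq_abs]
      ring
    rw [hexp]
    have := mul_le_mul_of_nonneg_left (hsub J) (sq_nonneg ξ)
    nlinarith [this, sq_nonneg ξ]
  -- counting
  classical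
  have hscard : (({0} : Finset (Fin (n+1)))ᶜ).card = n := by
    simp [Finset.card_compl]
  have hchoose : n.choose (n-1) = n := by
    rw [Nat.choose_symm (by omega : 1 ≤ n), Nat.choose_one_right]
  have hcardP : ((({0} : Finset (Fin (n+1)))ᶜ).powersetCard (n-1)).card = n := by
    rw [Finset.card_powersetCard, hscard, hchoose]
  set s : Finset (Fin (n+1)) := ({0} : Finset (Fin (n+1)))ᶜ with hs
  have hQ : ∑ I' ∈ s.powersetCard (n-1), ∑ i ∈ ({0} : Finset (Fin (n+1))) ∪ I', c i
      = (n:ℝ) * c 0 + ((n:ℝ) - 1) * ∑ i ∈ s, c i := by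
    have h1 : ∀ I' ∈ s.powersetCard (n-1),
        ∑ i ∈ ({0} : Finset (Fin (n+1))) ∪ I', c i = c 0 + ∑ i ∈ I', c i := by
      intro I' hI'
      have h0 : (0 : Fin (n+1)) ∉ I' := by
        intro h
        have := (Finset.mem_powersetCard.1 hI').1 h
        simp [hs] at this
      rw [Finset.sum_union (Finset.disjoint_singleton_left.2 h0), Finset.sum_singleton]
    rw [Finset.sum_congr rfl h1, Finset.sum_add_distrib, Finset.sum_const, hcardP]
    congr 1
    · rw [nsmul_eq_mul]
    · rw [show n - 1 = (n-2)+1 from by omega, sum_powersetCard_sum, hscard]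
      congr 1
      have h2 : (n-1).choose (n-2) = n-1 := by
        rw [show n - 2 = (n-1)-1 from by omega, Nat.choose_symm (by omega : 1 ≤ n-1),
          Nat.choose_one_right]
      rw [h2, Nat.cast_sub (by omega : 1 ≤ n), Nat.cast_one]
  have hsum : ∑ I' ∈ s.powersetCard (n-1),
        ‖e - ξ • ∑ i ∈ ({0} : Finset (Fin (n+1))) ∪ I', F i‖ ^ 2
      ≤ (n:ℝ) * ‖e‖^2 + (ξ^2*lmax - 2*ξ) *
        ((n:ℝ) * c 0 + ((n:ℝ)-1) * ∑ i ∈ s, c i) := by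
    calc ∑ I' ∈ s.powersetCard (n-1),
          ‖e - ξ • ∑ i ∈ ({0} : Finset (Fin (n+1))) ∪ I', F i‖ ^ 2
        ≤ ∑ I' ∈ s.powersetCard (n-1),
            (‖e‖^2 + (ξ^2*lmax - 2*ξ) * ∑ i ∈ ({0} : Finset (Fin (n+1))) ∪ I', c i) :=
          Finset.sum_le_sum fun I' _ => hper _
      _ = ((s.powersetCard (n-1)).card : ℝ) * ‖e‖^2 + (ξ^2*lmax-2*ξ) *
            ∑ I' ∈ s.powersetCard (n-1), ∑ i ∈ ({0} : Finset (Fin (n+1))) ∪ I', c i := by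
          rw [Finset.sum_add_distrib, Finset.sum_const, ← Finset.mul_sum, nsmul_eq_mul]
      _ = _ := by rw [hcardP, hQ]
  -- lower bound on Q
  have htot : c 0 + ∑ i ∈ s, c i = ∑ i, c i := by
    rw [hs, ← Finset.sum_add_sum_compl ({0} : Finset (Fin (n+1))) c, Finset.sum_singleton]
  have hQge : ((n:ℝ)-1) * lmin * ‖e‖^2 ≤ (n:ℝ) * c 0 + ((n:ℝ)-1) * ∑ i ∈ s, c i := by
    have h3 : ((n:ℝ)-1) * (lmin*‖e‖^2) ≤ ((n:ℝ)-1)*c 0 + ((n:ℝ)-1)*(∑ i ∈ s, c i) := by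
      calc ((n:ℝ)-1)*(lmin*‖e‖^2) ≤ ((n:ℝ)-1)*(∑ i, c i) :=
            mul_le_mul_of_nonneg_left hS (by linarith)
        _ = _ := by rw [← htot]; ring
    have := hc0 0
    linarith
  -- final chain
  have hβ : ξ^2*lmax - 2*ξ = -(((n:ℝ)-1)*((n:ℝ)+1)/((n:ℝ)^2*lmax)) := by
    rw [hξ]; field_simp; ring
  have hA : (0:ℝ) ≤ ((n:ℝ)-1)*((n:ℝ)+1)/((n:ℝ)^2*lmax) := by
    apply div_nonneg (by nlinarith) (by positivity)
  set A : ℝ := ((n:ℝ)-1)*((n:ℝ)+1)/((n:ℝ)^2*lmax) with hAdef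
  rw [hchoose]
  calc ((n:ℕ):ℝ)⁻¹ * ∑ I' ∈ s.powersetCard (n-1),
        ‖e - ξ • ∑ i ∈ ({0} : Finset (Fin (n+1))) ∪ I', F i‖ ^ 2
      ≤ ((n:ℝ))⁻¹ * ((n:ℝ) * ‖e‖^2 + (ξ^2*lmax - 2*ξ) *
          ((n:ℝ) * c 0 + ((n:ℝ)-1) * ∑ i ∈ s, c i)) :=
        mul_le_mul_of_nonneg_left hsum (by positivity)
    _ = ‖e‖^2 - A * ((n:ℝ) * c 0 + ((n:ℝ)-1) * ∑ i ∈ s, c i) / (n:ℝ) := by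
        rw [hβ]; field_simp; ring
    _ ≤ ‖e‖^2 - A * (((n:ℝ)-1) * lmin * ‖e‖^2) / (n:ℝ) := by
        have h4 : A * (((n:ℝ)-1) * lmin * ‖e‖^2) ≤
            A * ((n:ℝ) * c 0 + ((n:ℝ)-1) * ∑ i ∈ s, c i) :=
          mul_le_mul_of_nonneg_left hQge hA
        have h5 := (div_le_div_iff_of_pos_right hN0).2 h4
        linarith
    _ ≤ (1 - ((n:ℝ) - 1) ^ 2 / ((n : ℝ) ^ 2 * (lmax / lmin))) * ‖e‖ ^ 2 := by
        have hcoef : ((n:ℝ) - 1) ^ 2 / ((n : ℝ) ^ 2 * (lmax / lmin))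
            ≤ A * (((n:ℝ)-1) * lmin) / (n:ℝ) := by
          have hL : ((n:ℝ) - 1) ^ 2 / ((n : ℝ) ^ 2 * (lmax / lmin))
              = ((n:ℝ)-1)^2*lmin / ((n:ℝ)^2*lmax) := by
            rw [div_eq_div_iff (by positivity) (by positivity)]
            field_simp
          have hR : A * (((n:ℝ)-1) * lmin) / (n:ℝ)
              = ((n:ℝ)-1)^2*((n:ℝ)+1)*lmin / ((n:ℝ)^3*lmax) := by
            rw [hAdef]
            field_simp
          rw [hL, hR, div_le_div_iff₀ (by positivity) (by positivity)]
          nlinarith [mul_nonneg (mul_nonneg (mul_nonneg (sq_nonneg ((n:ℝ)-1)) hlmin.le)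
            (sq_nonneg (n:ℝ))) hlmax.le]
        have h8 : ((n:ℝ) - 1) ^ 2 / ((n:ℝ) ^ 2 * (lmax / lmin)) * ‖e‖ ^ 2
            ≤ A * (((n:ℝ) - 1) * lmin * ‖e‖ ^ 2) / (n:ℝ) := by
          calc ((n:ℝ) - 1) ^ 2 / ((n:ℝ) ^ 2 * (lmax / lmin)) * ‖e‖ ^ 2
              ≤ (A * (((n:ℝ)-1) * lmin) / (n:ℝ)) * ‖e‖ ^ 2 :=
                mul_le_mul_of_nonneg_right hcoef (sq_nonneg _)
            _ = A * (((n:ℝ) - 1) * lmin * ‖e‖ ^ 2) / (n:ℝ) := by ring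
        linarith [h8]
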